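/- Let (g_k) be a frame sequence in a Hilbert space H and V = closure of span(g_k). Then the orthogonal projection of any f ∈ H onto V is given by P(f) = D G† C f, where C is the analysis operator, D = C* the synthesis operator, and G† the pseudoinverse of the Gram matrix G of (g_k). -/

import Mathlib

open scoped InnerProductSpace

set_option maxHeartbeats 1000000

/-- For a frame sequence `(g k)` (a frame for `V`, the closure of its span) with
analysis operator `C`, synthesis operator `D = C*` and Gram matrix `G = C D` with Moore–Penrose
pseudoinverse `G†`, the orthogonal projection onto `V` is `P f = D G† C f`. -/
theorem frame_sequence_projection
    {H K : Type*} [NormedAddCommGroup H] [InnerProductSpace ℂ H] [CompleteSpace H]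
    (g : K → H) (A B : ℝ) (hA : 0 < A) (hB : 0 < B)
    (hframeseq : ∀ x ∈ (Submodule.span ℂ (Set.range g)).topologicalClosure,
      A * ‖x‖ ^ 2 ≤ ∑' k, ‖⟪g k, x⟫_ℂ‖ ^ 2 ∧ ∑' k, ‖⟪g k, x⟫_ℂ‖ ^ 2 ≤ B * ‖x‖ ^ 2)
    (C : H →L[ℂ] lp (fun _ : K => ℂ) 2)
    (hC : ∀ (x : H) (k : K), (C x : ∀ _ : K, ℂ) k = ⟪g k, x⟫_ℂ)
    (D : lp (fun _ : K => ℂ) 2 →L[ℂ] H) (hD : D = ContinuousLinearMap.adjoint C)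
    (G : lp (fun _ : K => ℂ) 2 →L[ℂ] lp (fun _ : K => ℂ) 2) (hG : G = C.comp D)
    -- `Gdag` is the Moore–Penrose pseudoinverse of `G`
    (Gdag : lp (fun _ : K => ℂ) 2 →L[ℂ] lp (fun _ : K => ℂ) 2)
    (hg1 : G.comp (Gdag.comp G) = G) (hg2 : Gdag.comp (G.comp Gdag) = Gdag)
    (hg3 : ContinuousLinearMap.adjoint (G.comp Gdag) = G.comp Gdag)
    (hg4 : ContinuousLinearMap.adjoint (Gdag.comp G) = Gdag.comp G) :
    ∀ f : H,
      (Submodule.orthogonalProjection (Submodule.span ℂ (Set.range g)).topologicalClosure f : H) =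
        D (Gdag (C f)) := by
  set V := (Submodule.span ℂ (Set.range g)).topologicalClosure with hVdef
  have hVc : IsClosed (V : Set H) := Submodule.isClosed_topologicalClosure _
  haveI : CompleteSpace V := hVc.completeSpace_coe
  have hgV : ∀ k, g k ∈ V := fun k =>
    Submodule.le_topologicalClosure _ (Submodule.subset_span ⟨k, rfl⟩)
  have hVorth : Vᗮ = (Submodule.span ℂ (Set.range g))ᗮ := by
    rw [hVdef, ← Submodule.orthogonal_orthogonal_eq_closure,
      Submodule.triorthogonal_eq_orthogonal]
  -- characterization of the kernel of C
  have hCzero : ∀ x : H, C x = 0 ↔ x ∈ Vᗮ := by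
    intro x
    constructor
    · intro hx
      rw [hVorth, Submodule.mem_orthogonal]
      intro u hu
      induction hu using Submodule.span_induction with
      | mem u hu =>
        obtain ⟨k, rfl⟩ := hu
        have := congrArg (fun z : lp (fun _ : K => ℂ) 2 => (z : ∀ _ : K, ℂ) k) hx
        simpa [hC] using this
      | zero => simp
      | add u v _ _ hu hv => rw [inner_add_left, hu, hv, add_zero]
      | smul a u _ hu => rw [inner_smul_left, hu, mul_zero]
    · intro hx
      apply lp.ext
      funext k
      have : ⟪g k, x⟫_ℂ = 0 := (Submodule.mem_orthogonal V x).1 hx _ (hgV k)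
      simp [hC, this]
  -- D maps into V
  have hDV : ∀ c, D c ∈ V := by
    intro c
    rw [← Submodule.orthogonal_orthogonal V, Submodule.mem_orthogonal]
    intro u hu
    rw [hD, ContinuousLinearMap.adjoint_inner_right, (hCzero u).2 hu, inner_zero_left]
  -- kernel of G is contained in kernel of D
  have hkerDG : ∀ z, G z = 0 → D z = 0 := by
    intro z hz
    have h1 : D z ∈ Vᗮ := by
      apply (hCzero (D z)).1
      rw [hG] at hz
      exact hz
    have h2 : ⟪D z, D z⟫_ℂ = 0 :=
      (Submodule.mem_orthogonal V (D z)).1 h1 _ (hDV z)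
    exact inner_self_eq_zero.1 h2
  -- norm identity for C
  have hCnorm : ∀ x : H, ‖C x‖ ^ 2 = ∑' k, ‖⟪g k, x⟫_ℂ‖ ^ 2 := by
    intro x
    have hp : 0 < (2 : ENNReal).toReal := by norm_num
    have := lp.norm_rpow_eq_tsum hp (C x)
    have h2 : (2 : ENNReal).toReal = (2 : ℝ) := by norm_num
    rw [h2] at this
    calc ‖C x‖ ^ 2 = ‖C x‖ ^ (2 : ℝ) := by rw [← Real.rpow_natCast]; norm_num
      _ = ∑' k, ‖(C x : ∀ _ : K, ℂ) k‖ ^ (2 : ℝ) := this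
      _ = ∑' k, ‖⟪g k, x⟫_ℂ‖ ^ 2 := by
          apply tsum_congr
          intro k
          rw [hC, ← Real.rpow_natCast]; norm_num
  -- inner product identity: ⟪x, D (C x)⟫ = ‖C x‖²
  have hinner : ∀ x : H, ⟪x, D (C x)⟫_ℂ = (‖C x‖ : ℂ) ^ 2 := by
    intro x
    rw [hD, ContinuousLinearMap.adjoint_inner_right, inner_self_eq_norm_sq_to_K]
    norm_cast
  -- the frame operator restricted to V
  let S : H →L[ℂ] H := D.comp C
  have hSV : ∀ x : H, S x ∈ V := fun x => hDV (C x)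
  let T : V →L[ℂ] V := (S.comp V.subtypeL).codRestrict V (fun x => hSV x)
  have hTapp : ∀ x : V, (T x : H) = D (C (x : H)) := fun x => rfl
  -- lower bound for T
  have hTlow : ∀ x : V, A * ‖x‖ ≤ ‖T x‖ := by
    intro x
    rcases eq_or_ne x 0 with rfl | hx0
    · simp
    have hxpos : (0 : ℝ) < ‖x‖ := norm_pos_iff.2 hx0
    have h1 : A * ‖(x : H)‖ ^ 2 ≤ ‖C (x : H)‖ ^ 2 := by
      rw [hCnorm]; exact (hframeseq _ x.2).1
    have h2 : ‖C (x : H)‖ ^ 2 ≤ ‖(x : H)‖ * ‖T x‖ := by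
      have := re_inner_le_norm (𝕜 := ℂ) (x : H) (D (C (x : H)))
      rw [hinner] at this
      have hre : RCLike.re ((‖C (x : H)‖ : ℂ) ^ 2) = ‖C (x : H)‖ ^ 2 := by
        norm_cast
      rw [hre] at this
      have hn : ‖D (C (x : H))‖ = ‖T x‖ := by rw [← hTapp]; rfl
      rw [hn] at this
      exact this
    have hxn : ‖(x : H)‖ = ‖x‖ := rfl
    rw [hxn] at h1 h2
    have : A * ‖x‖ ^ 2 ≤ ‖x‖ * ‖T x‖ := le_trans h1 h2
    have := (mul_le_mul_iff_right₀ hxpos).1 (by nlinarith : ‖x‖ * (A * ‖x‖) ≤ ‖x‖ * ‖T x‖)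
    exact this
  -- T is antilipschitz, hence injective and with closed range
  have hanti : AntilipschitzWith (Real.toNNReal A)⁻¹ T := by
    apply T.antilipschitz_of_bound
    intro x
    have hco : (((Real.toNNReal A)⁻¹ : NNReal) : ℝ) = A⁻¹ := by
      rw [NNReal.coe_inv, Real.coe_toNNReal _ hA.le]
    rw [hco, ← div_eq_inv_mul, le_div_iff₀ hA, mul_comm]
    exact hTlow x
  have hTinj : Function.Injective T := hanti.injective
  -- range of T is a closed submodule
  let R : Submodule ℂ V := LinearMap.range (T : V →ₗ[ℂ] V)
  have hRclosed : IsClosed (R : Set V) := by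
    have : (R : Set V) = Set.range T := by
      ext y; simp [R, LinearMap.mem_range]
    rw [this]
    exact hanti.isClosed_range T.uniformContinuous
  haveI : CompleteSpace R := hRclosed.completeSpace_coe
  -- T is symmetric
  have hTsymm : ∀ x y : V, ⟪(T x : V), y⟫_ℂ = ⟪x, T y⟫_ℂ := by
    intro x y
    have h1 : ⟪(T x : V), y⟫_ℂ = ⟪(D (C (x : H)) : H), (y : H)⟫_ℂ := by
      rw [← hTapp]; rfl
    have h2 : ⟪(x : V), T y⟫_ℂ = ⟪(x : H), (D (C (y : H)) : H)⟫_ℂ := by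
      rw [← hTapp]; rfl
    rw [h1, h2, hD, ContinuousLinearMap.adjoint_inner_left,
      ContinuousLinearMap.adjoint_inner_right]
  -- R has trivial orthogonal complement
  have hRorth : Rᗮ = ⊥ := by
    rw [Submodule.eq_bot_iff]
    intro y hy
    have h0 : ⟪y, T y⟫_ℂ = 0 := by
      rw [← hTsymm]
      exact ((Submodule.mem_orthogonal R y).1 hy) _ ⟨y, rfl⟩
    have h2 : ⟪(y : H), D (C (y : H))⟫_ℂ = 0 := by
      have heq : ⟪y, T y⟫_ℂ = ⟪(y : H), (D (C (y : H)) : H)⟫_ℂ := by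
        rw [← hTapp]; rfl
      rw [← heq, h0]
    rw [hinner] at h2
    have h3 : ‖C (y : H)‖ = 0 := by
      have h2'' : (‖C (y : H)‖ : ℂ) = 0 := pow_eq_zero_iff two_ne_zero |>.1 h2
      exact_mod_cast h2''
    have hCy : C (y : H) = 0 := norm_eq_zero.1 h3
    have hyV : (y : H) ∈ Vᗮ := (hCzero _).1 hCy
    have h5 : ⟪(y : H), (y : H)⟫_ℂ = 0 :=
      (Submodule.mem_orthogonal V (y : H)).1 hyV _ y.2
    exact Subtype.ext (inner_self_eq_zero.1 h5)
  -- hence T is surjective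
  have hRtop : R = ⊤ := by
    have := Submodule.orthogonal_orthogonal R
    rw [hRorth, Submodule.bot_orthogonal_eq_top] at this
    exact this.symm
  intro f
  -- the projection of f lies in the range of T
  have hmem : Submodule.orthogonalProjection V f ∈ R := hRtop ▸ Submodule.mem_top
  obtain ⟨w, hw⟩ := hmem
  set c := C (w : H) with hc
  have hDc : D c = (Submodule.orthogonalProjection V f : H) := by
    rw [hc, ← hTapp]; exact congrArg Subtype.val hw
  -- C f = G c
  have hCf : C f = G c := by
    have hsub : f - (Submodule.orthogonalProjection V f : H) ∈ Vᗮ :=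
      V.sub_starProjection_mem_orthogonal f
    have h0 : C (f - (Submodule.orthogonalProjection V f : H)) = 0 := (hCzero _).2 hsub
    rw [map_sub, sub_eq_zero] at h0
    rw [h0, ← hDc, hG]
    rfl
  -- D (Gdag (G c)) = D c
  have hkey : D (Gdag (G c)) = D c := by
    have h1 : G (c - Gdag (G c)) = 0 := by
      rw [map_sub, sub_eq_zero]
      exact (congrFun (congrArg DFunLike.coe hg1.symm) c)
    have h2 := hkerDG _ h1
    rw [map_sub, sub_eq_zero] at h2
    exact h2.symm
  rw [hCf, hkey, hDc]
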